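/- Every finite MV-algebra is isomorphic to a finite direct product of finite simple MV-algebras Łₙ; that is, if A is a finite MV-algebra, then there exist l ∈ ℕ, positive natural numbers n₀, …, n_{l−1}, and a bijective homomorphism from A onto the product ∏_{i<l} Ł_{n_i}, where the product carries the componentwise operations. -/

import Mathlib

universe u v

/-- An MV-algebra: operations ⊕, ¬, 0 satisfying MV1–MV6. -/
structure MVAlgebra (A : Type u) where
  oplus : A → A → A
  neg : A → A
  zero : A
  mv1 : ∀ x y z, oplus (oplus x y) z = oplus x (oplus y z)
  mv2 : ∀ x y, oplus x y = oplus y x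
  mv3 : ∀ x, oplus x zero = x
  mv4 : ∀ x, neg (neg x) = x
  mv5 : ∀ x, oplus x (neg zero) = neg zero
  mv6 : ∀ x y, oplus (neg (oplus (neg x) y)) y = oplus (neg (oplus x (neg y))) x

/-- The carrier of the Łukasiewicz chain Łₙ : {k/n : k ∈ ℕ, 0 ≤ k ≤ n} ⊆ ℚ. -/
abbrev Luk (n : ℕ+) : Type := {x : ℚ // ∃ k : ℕ, k ≤ (n : ℕ) ∧ x = (k : ℚ) / (n : ℕ)}

/-- The constant 0 of Łₙ. -/
def lukZero (n : ℕ+) : Luk n := ⟨0, 0, Nat.zero_le _, by simp⟩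

/-- The negation ¬x = 1 - x of Łₙ. -/
def lukNeg {n : ℕ+} (x : Luk n) : Luk n :=
  ⟨1 - x.1, by
    obtain ⟨k, hk, hx⟩ := x.2
    refine ⟨(n : ℕ) - k, Nat.sub_le _ _, ?_⟩
    have hn : ((n : ℕ) : ℚ) ≠ 0 := by exact_mod_cast n.pos.ne'
    rw [hx, Nat.cast_sub hk, sub_div, div_self hn]⟩

/-- The truncated sum x ⊕ y = min 1 (x + y) of Łₙ. -/
def lukOplus {n : ℕ+} (x y : Luk n) : Luk n :=
  ⟨min 1 (x.1 + y.1), by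
    obtain ⟨k, hk, hx⟩ := x.2
    obtain ⟨j, hj, hy⟩ := y.2
    refine ⟨min (n : ℕ) (k + j), min_le_left _ _, ?_⟩
    have hn : (0 : ℚ) < ((n : ℕ) : ℚ) := by exact_mod_cast n.pos
    rw [hx, hy, ← add_div]
    rcases le_total (k + j) (n : ℕ) with h | h
    · rw [min_eq_right h, min_eq_right]
      · push_cast; ring_nf
      · rw [div_le_one hn]; exact_mod_cast h
    · rw [min_eq_left h, min_eq_left, div_self hn.ne']
      · rw [one_le_div hn]; exact_mod_cast h⟩

namespace MVP


variable {A : Type u}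

def one (M : MVAlgebra A) : A := M.neg M.zero

def le (M : MVAlgebra A) (x y : A) : Prop := M.oplus (M.neg x) y = one M

def odot (M : MVAlgebra A) (x y : A) : A := M.neg (M.oplus (M.neg x) (M.neg y))

def ominus (M : MVAlgebra A) (x y : A) : A := M.neg (M.oplus (M.neg x) y)

def sup (M : MVAlgebra A) (x y : A) : A := M.oplus (ominus M x y) y

def inf (M : MVAlgebra A) (x y : A) : A := M.neg (sup M (M.neg x) (M.neg y))

variable {M : MVAlgebra A}

lemma oplus_one (x : A) : M.oplus x (one M) = one M := M.mv5 x

lemma one_oplus (x : A) : M.oplus (one M) x = one M := by rw [M.mv2]; exact M.mv5 x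

lemma zero_oplus (x : A) : M.oplus M.zero x = x := by rw [M.mv2]; exact M.mv3 x

lemma neg_one : M.neg (one M) = M.zero := M.mv4 M.zero

lemma neg_inj {x y : A} (h : M.neg x = M.neg y) : x = y := by
  rw [← M.mv4 x, h, M.mv4]

lemma le_refl (x : A) : le M x x := by
  have h := M.mv6 x (one M)
  rw [oplus_one, neg_one, M.mv3] at h
  exact h.symm

-- x ⊕ ¬x = 1 as an equation
lemma oplus_neg_self (x : A) : M.oplus (M.neg x) x = one M := le_refl x

lemma oplus_neg_self' (x : A) : M.oplus x (M.neg x) = one M := by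
  rw [M.mv2]; exact le_refl x

lemma le_elim {x y : A} (h : le M x y) :
    y = M.oplus (M.neg (M.oplus x (M.neg y))) x := by
  have h6 := M.mv6 x y
  rw [le] at h
  rw [h, neg_one, zero_oplus] at h6
  exact h6

lemma le_of_eq_oplus {x y z : A} (h : y = M.oplus x z) : le M x y := by
  rw [le, h, ← M.mv1, oplus_neg_self, one_oplus]

lemma exists_add {x y : A} (h : le M x y) : ∃ z, y = M.oplus x z := by
  refine ⟨M.neg (M.oplus x (M.neg y)), ?_⟩
  rw [M.mv2]; exact le_elim h

lemma le_oplus_left (x z : A) : le M x (M.oplus x z) := le_of_eq_oplus rfl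

lemma le_oplus_right (x z : A) : le M x (M.oplus z x) := le_of_eq_oplus (M.mv2 z x)

lemma le_trans {x y z : A} (h1 : le M x y) (h2 : le M y z) : le M x z := by
  obtain ⟨a, ha⟩ := exists_add h1
  obtain ⟨b, hb⟩ := exists_add h2
  exact le_of_eq_oplus (by rw [hb, ha, M.mv1])

lemma le_antisymm {x y : A} (h1 : le M x y) (h2 : le M y x) : x = y := by
  have := le_elim h1
  rw [M.mv2 x (M.neg y)] at this
  rw [le] at h2
  rw [h2, neg_one, zero_oplus] at this
  exact this.symm

lemma le_zero (x : A) : le M M.zero x := by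
  rw [le]; exact one_oplus x

lemma le_one (x : A) : le M x (one M) := by
  rw [le]; exact oplus_one _

lemma oplus_le_oplus {x y z w : A} (h1 : le M x y) (h2 : le M z w) :
    le M (M.oplus x z) (M.oplus y w) := by
  obtain ⟨a, ha⟩ := exists_add h1
  obtain ⟨b, hb⟩ := exists_add h2
  refine le_of_eq_oplus (z := M.oplus a b) ?_
  rw [ha, hb]
  rw [M.mv1, M.mv1]
  congr 1
  rw [← M.mv1, ← M.mv1, M.mv2 a z]

lemma neg_le_neg {x y : A} (h : le M x y) : le M (M.neg y) (M.neg x) := by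
  rw [le, M.mv4, M.mv2]; exact h

lemma eq_zero_of_le_zero {x : A} (h : le M x M.zero) : x = M.zero :=
  (le_antisymm (le_zero x) h).symm

lemma eq_one_of_one_le {x : A} (h : le M (one M) x) : x = one M :=
  le_antisymm (le_one x) h

-- lattice layer (appended to basic)
variable (M) in
lemma odot_def (x y : A) : odot M x y = M.neg (M.oplus (M.neg x) (M.neg y)) := rfl

lemma ominus_eq (x y : A) : ominus M x y = odot M x (M.neg y) := by
  rw [ominus, odot, M.mv4]

lemma odot_comm (x y : A) : odot M x y = odot M y x := by
  rw [odot, odot, M.mv2]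

lemma odot_assoc (x y z : A) : odot M (odot M x y) z = odot M x (odot M y z) := by
  rw [odot, odot, odot, odot, M.mv4, M.mv4, M.mv1]

lemma odot_one (x : A) : odot M x (one M) = x := by
  rw [odot, one, M.mv4, M.mv3, M.mv4]

lemma one_odot (x : A) : odot M (one M) x = x := by rw [odot_comm, odot_one]

lemma odot_zero (x : A) : odot M x M.zero = M.zero := by
  rw [odot]
  have : M.oplus (M.neg x) (M.neg M.zero) = M.neg M.zero := M.mv5 _
  rw [this, M.mv4]

lemma zero_odot (x : A) : odot M M.zero x = M.zero := by rw [odot_comm, odot_zero]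

lemma odot_neg_self (x : A) : odot M x (M.neg x) = M.zero := by
  rw [odot, M.mv4, oplus_neg_self, neg_one]

lemma odot_le_left (x y : A) : le M (odot M x y) x := by
  rw [le, odot, M.mv4, M.mv2 (M.neg x) (M.neg y), M.mv1, oplus_neg_self, oplus_one]

lemma odot_le_right (x y : A) : le M (odot M x y) y := by
  rw [odot_comm]; exact odot_le_left y x

lemma odot_mono {x y z w : A} (h1 : le M x y) (h2 : le M z w) :
    le M (odot M x z) (odot M y w) := by
  have := oplus_le_oplus (neg_le_neg h1) (neg_le_neg h2)
  have := neg_le_neg this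
  rw [odot, odot]
  exact this

lemma sup_comm (x y : A) : sup M x y = sup M y x := by
  have h := M.mv6 x y
  rw [sup, sup, ominus, ominus]
  rw [h, M.mv2 x (M.neg y)]

lemma le_sup_right (x y : A) : le M y (sup M x y) := le_oplus_right _ _

lemma le_sup_left (x y : A) : le M x (sup M x y) := by
  rw [sup_comm]; exact le_sup_right y x

lemma sup_eq_right {x y : A} (h : le M x y) : sup M x y = y := by
  rw [sup, ominus]
  rw [le] at h
  rw [h, neg_one, zero_oplus]

lemma ominus_mono_left {x z : A} (h : le M x z) (y : A) :
    le M (ominus M x y) (ominus M z y) := by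
  rw [ominus, ominus]
  exact neg_le_neg (oplus_le_oplus (neg_le_neg h) (le_refl y))

lemma ominus_antitone_right {y w : A} (h : le M y w) (x : A) :
    le M (ominus M x w) (ominus M x y) := by
  rw [ominus, ominus]
  exact neg_le_neg (oplus_le_oplus (le_refl (M.neg x)) h)

lemma sup_le {x y z : A} (h1 : le M x z) (h2 : le M y z) : le M (sup M x y) z := by
  have step1 : le M (sup M x y) (sup M z y) :=
    oplus_le_oplus (ominus_mono_left h1 y) (le_refl y)
  rw [sup_comm z y, sup_eq_right h2] at step1
  exact step1

lemma inf_comm (x y : A) : inf M x y = inf M y x := by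
  rw [inf, inf, sup_comm]

lemma neg_inf (x y : A) : M.neg (inf M x y) = sup M (M.neg x) (M.neg y) := by
  rw [inf, M.mv4]

lemma neg_sup (x y : A) : M.neg (sup M x y) = inf M (M.neg x) (M.neg y) := by
  rw [inf, M.mv4, M.mv4]

-- inf x y = x ⊙ (¬x ⊕ y)
lemma inf_eq (x y : A) : inf M x y = odot M x (M.oplus (M.neg x) y) := by
  rw [inf, sup_comm, sup, ominus, M.mv4, odot]
  rw [M.mv2 (M.neg x) (M.neg (M.oplus (M.neg x) y)), M.mv2 y (M.neg x)]

lemma inf_le_left (x y : A) : le M (inf M x y) x := by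
  rw [inf_eq]; exact odot_le_left _ _

lemma inf_le_right (x y : A) : le M (inf M x y) y := by
  rw [inf_comm]; exact inf_le_left y x

lemma le_inf {x y z : A} (h1 : le M x y) (h2 : le M x z) : le M x (inf M y z) := by
  have : le M (sup M (M.neg y) (M.neg z)) (M.neg x) :=
    sup_le (neg_le_neg h1) (neg_le_neg h2)
  have := neg_le_neg this
  rw [M.mv4] at this
  exact this

-- x ⊖ (x ⊖ y) = inf x y
lemma ominus_ominus (x y : A) : ominus M x (ominus M x y) = inf M x y := by
  rw [ominus_eq x (ominus M x y), ominus, M.mv4, inf_eq]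

lemma ominus_le_self (x y : A) : le M (ominus M x y) x := by
  rw [ominus_eq]; exact odot_le_left _ _

lemma ominus_eq_zero {x y : A} (h : le M x y) : ominus M x y = M.zero := by
  rw [le] at h
  rw [ominus, h, neg_one]

lemma le_of_ominus_eq_zero {x y : A} (h : ominus M x y = M.zero) : le M x y := by
  rw [ominus] at h
  have h2 := congrArg M.neg h
  rw [M.mv4] at h2
  exact h2

lemma le_oplus_ominus (x y : A) : le M x (M.oplus y (ominus M x y)) := by
  have : le M x (sup M x y) := le_sup_left x y
  rw [sup, M.mv2] at this
  exact this

lemma ominus_oplus_le (x y : A) : le M (ominus M (M.oplus x y) y) x := by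
  rw [le, ominus, M.mv4, M.mv1, M.mv2 y x, oplus_neg_self]

lemma inf_one (x : A) : inf M x (one M) = x :=
  le_antisymm (inf_le_left _ _) (le_inf (le_refl x) (le_one x))

lemma inf_zero (x : A) : inf M x M.zero = M.zero :=
  le_antisymm (inf_le_right _ _) (le_zero _)

lemma zero_inf (x : A) : inf M M.zero x = M.zero := by rw [inf_comm]; exact inf_zero x

lemma inf_eq_left {x y : A} (h : le M x y) : inf M x y = x :=
  le_antisymm (inf_le_left _ _) (le_inf (le_refl x) h)

lemma inf_eq_right {x y : A} (h : le M y x) : inf M x y = y :=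
  le_antisymm (inf_le_right _ _) (le_inf h (le_refl y))

-- x ⊖ (inf x y) = x ⊖ y
lemma ominus_inf (x y : A) : ominus M x (inf M x y) = ominus M x y := by
  rw [← ominus_ominus x y, ominus_ominus x (ominus M x y)]
  exact inf_eq_right (ominus_le_self x y)

-- distributivity inequality 1
lemma inf_oplus_le (x y z : A) :
    le M (inf M (M.oplus y x) (M.oplus y z)) (M.oplus y (inf M x z)) := by
  set w := inf M (M.oplus y x) (M.oplus y z) with hw
  have h1 : le M (ominus M w y) x :=
    le_trans (ominus_mono_left (inf_le_left _ _) y) (by rw [M.mv2 y x]; exact ominus_oplus_le x y)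
  have h2 : le M (ominus M w y) z :=
    le_trans (ominus_mono_left (inf_le_right _ _) y) (by rw [M.mv2 y z]; exact ominus_oplus_le z y)
  exact le_trans (le_oplus_ominus w y)
    (oplus_le_oplus (le_refl y) (le_inf h1 h2))

-- distributivity inequality 2
lemma inf_oplus_le2 (x p q : A) :
    le M (inf M x (M.oplus p q)) (M.oplus (inf M x p) (inf M x q)) := by
  set w := inf M x (M.oplus p q) with hw
  have h0 : le M w x := inf_le_left _ _
  have hpq : le M w (M.oplus p q) := inf_le_right _ _
  have hsub : le M (inf M w p) (inf M x p) :=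
    le_inf (le_trans (inf_le_left _ _) h0) (inf_le_right _ _)
  have hA : le M (ominus M w (inf M x p)) q := by
    refine le_trans (ominus_antitone_right hsub w) ?_
    rw [ominus_inf]
    refine le_trans (ominus_mono_left hpq p) ?_
    rw [M.mv2 p q]
    exact ominus_oplus_le q p
  have hB : le M (ominus M w (inf M x p)) x := le_trans (ominus_le_self _ _) h0
  exact le_trans (le_oplus_ominus w (inf M x p))
    (oplus_le_oplus (le_refl _) (le_inf hB hA))

-- finiteness tools
def dbl (M : MVAlgebra A) (x : A) : ℕ → A
  | 0 => x
  | k+1 => M.oplus (dbl M x k) (dbl M x k)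

def sq (M : MVAlgebra A) (x : A) : ℕ → A
  | 0 => x
  | k+1 => odot M (sq M x k) (sq M x k)

def mul (M : MVAlgebra A) (c : A) : ℕ → A
  | 0 => M.zero
  | k+1 => M.oplus (mul M c k) c

lemma dbl_le_succ (x : A) (k : ℕ) : le M (dbl M x k) (dbl M x (k+1)) :=
  le_oplus_left _ _

lemma dbl_mono (x : A) {k l : ℕ} (h : k ≤ l) : le M (dbl M x k) (dbl M x l) := by
  induction h with
  | refl => exact le_refl _
  | step _ ih => exact le_trans ih (dbl_le_succ _ _)

lemma sq_succ_le (x : A) (k : ℕ) : le M (sq M x (k+1)) (sq M x k) :=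
  odot_le_left _ _

lemma sq_antitone (x : A) {k l : ℕ} (h : k ≤ l) : le M (sq M x l) (sq M x k) := by
  induction h with
  | refl => exact le_refl _
  | step _ ih => exact le_trans (sq_succ_le _ _) ih

lemma exists_dbl_idem [Finite A] (x : A) :
    ∃ k, M.oplus (dbl M x k) (dbl M x k) = dbl M x k := by
  obtain ⟨i, j, hne, heq⟩ := Finite.exists_ne_map_eq_of_infinite (dbl M x)
  have key : ∀ i j : ℕ, i < j → dbl M x i = dbl M x j →
      M.oplus (dbl M x i) (dbl M x i) = dbl M x i := by
    intro i j hij heq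
    have h1 : le M (dbl M x (i+1)) (dbl M x j) := dbl_mono x hij
    rw [← heq] at h1
    exact le_antisymm h1 (dbl_le_succ x i)
  rcases Nat.lt_or_ge i j with h | h
  · exact ⟨i, key i j h heq⟩
  · rcases Nat.lt_or_ge j i with h' | h'
    · exact ⟨j, key j i h' heq.symm⟩
    · exact absurd (Nat.le_antisymm h' h) hne

lemma exists_sq_idem [Finite A] (x : A) :
    ∃ k, odot M (sq M x k) (sq M x k) = sq M x k := by
  obtain ⟨i, j, hne, heq⟩ := Finite.exists_ne_map_eq_of_infinite (sq M x)
  have key : ∀ i j : ℕ, i < j → sq M x i = sq M x j →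
      odot M (sq M x i) (sq M x i) = sq M x i := by
    intro i j hij heq
    have h1 : le M (sq M x j) (sq M x (i+1)) := sq_antitone x hij
    rw [← heq] at h1
    exact le_antisymm (sq_succ_le x i) h1
  rcases Nat.lt_or_ge i j with h | h
  · exact ⟨i, key i j h heq⟩
  · rcases Nat.lt_or_ge j i with h' | h'
    · exact ⟨j, key j i h' heq.symm⟩
    · exact absurd (Nat.le_antisymm h' h) hne

section Idem

variable [Finite A] (hI : ∀ e : A, M.oplus e e = e → e = M.zero ∨ e = one M)

include hI

lemma order_one {x : A} (hx : x ≠ M.zero) : ∃ k, dbl M x k = one M := by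
  obtain ⟨k, hk⟩ := exists_dbl_idem (M := M) x
  rcases hI _ hk with h0 | h1
  · exfalso
    apply hx
    have hxk : le M x (dbl M x k) := dbl_mono x (Nat.zero_le k)
    rw [h0] at hxk
    exact eq_zero_of_le_zero hxk
  · exact ⟨k, h1⟩

lemma nilpotent {x : A} (hx : x ≠ one M) : ∃ k, sq M x k = M.zero := by
  obtain ⟨k, hk⟩ := exists_sq_idem (M := M) x
  have hneg : M.oplus (M.neg (sq M x k)) (M.neg (sq M x k)) = M.neg (sq M x k) := by
    have h2 := congrArg M.neg hk
    rw [odot, M.mv4] at h2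
    exact h2
  rcases hI _ hneg with h0 | h1
  · exfalso
    apply hx
    have he1 : sq M x k = one M := by rw [← M.mv4 (sq M x k), h0, one]
    have hle0 : le M (sq M x k) (sq M x 0) := sq_antitone x (Nat.zero_le k)
    rw [he1] at hle0
    exact le_antisymm (le_one x) hle0
  · refine ⟨k, ?_⟩
    have := congrArg M.neg h1
    rw [M.mv4, one, M.mv4] at this
    exact this

end Idem

-- multiples of an element, partial order, atoms
lemma mul_add (c : A) (i j : ℕ) :
    mul M c (i + j) = M.oplus (mul M c i) (mul M c j) := by
  induction j with
  | zero => rw [Nat.add_zero]; exact (M.mv3 _).symm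
  | succ j ih =>
      show mul M c (i + j + 1) = M.oplus (mul M c i) (M.oplus (mul M c j) c)
      show M.oplus (mul M c (i + j)) c = _
      rw [ih, M.mv1]

lemma mul_mono (c : A) {i j : ℕ} (h : i ≤ j) : le M (mul M c i) (mul M c j) := by
  obtain ⟨d, rfl⟩ := Nat.exists_eq_add_of_le h
  rw [mul_add]
  exact le_oplus_left _ _

lemma dbl_eq_mul (c : A) (k : ℕ) : dbl M c k = mul M c (2 ^ k) := by
  induction k with
  | zero =>
      show c = mul M c 1
      show c = M.oplus (mul M c 0) c
      show c = M.oplus M.zero c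
      rw [zero_oplus]
  | succ k ih =>
      show M.oplus (dbl M c k) (dbl M c k) = _
      rw [ih, ← mul_add]
      congr 1
      rw [pow_succ, Nat.mul_two]

def po (M : MVAlgebra A) : PartialOrder A where
  le := le M
  le_refl := le_refl
  le_trans := fun _ _ _ => le_trans
  le_antisymm := fun _ _ => le_antisymm

lemma exists_atom [Finite A] (h01 : M.zero ≠ one M) :
    ∃ c : A, c ≠ M.zero ∧ ∀ y, le M y c → y = M.zero ∨ y = c := by
  letI := po M
  haveI : WellFoundedLT A := Finite.to_wellFoundedLT
  obtain ⟨c, hc, hmin⟩ := (IsWellFounded.wf (r := ((· < ·) : A → A → Prop))).has_min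
    {x : A | x ≠ M.zero} ⟨one M, fun h => h01 h.symm⟩
  refine ⟨c, hc, fun y hy => ?_⟩
  by_cases h0 : y = M.zero
  · exact Or.inl h0
  · right
    by_contra hne
    exact hmin y h0 (lt_of_le_of_ne hy hne)

lemma inf_dbl_zero (c x : A) (h : inf M c x = M.zero) :
    ∀ k, inf M c (dbl M x k) = M.zero := by
  intro k
  induction k with
  | zero => exact h
  | succ k ih =>
      have h2 := inf_oplus_le2 (M := M) c (dbl M x k) (dbl M x k)
      rw [ih, M.mv3] at h2
      exact eq_zero_of_le_zero h2

section Idem2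

variable [Finite A] (hI : ∀ e : A, M.oplus e e = e → e = M.zero ∨ e = one M)

include hI

lemma eq_zero_of_inf_zero {c x : A} (hx : x ≠ M.zero) (h : inf M c x = M.zero) :
    c = M.zero := by
  obtain ⟨k, hk⟩ := order_one hI hx
  have h2 := inf_dbl_zero c x h k
  rw [hk, inf_one] at h2
  exact h2

lemma atom_le {c x : A} (hc0 : c ≠ M.zero)
    (hatom : ∀ y, le M y c → y = M.zero ∨ y = c) (hx : x ≠ M.zero) : le M c x := by
  rcases hatom (inf M c x) (inf_le_left c x) with h0 | hcx
  · exact absurd (eq_zero_of_inf_zero hI hx h0) hc0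
  · rw [← hcx]
    exact inf_le_right c x

lemma ominus_atom_ne {c x : A} (hc0 : c ≠ M.zero) (hx : x ≠ M.zero) :
    ominus M x c ≠ x := by
  intro heq
  have hkey : ∀ k, odot M x (sq M (M.neg c) k) = x := by
    intro k
    induction k with
    | zero =>
        show odot M x (M.neg c) = x
        rw [← ominus_eq]; exact heq
    | succ k ih =>
        show odot M x (odot M (sq M (M.neg c) k) (sq M (M.neg c) k)) = x
        rw [← odot_assoc, ih, ih]
  have hnc : M.neg c ≠ one M := fun h => hc0 (by rw [← M.mv4 c, h, neg_one])
  obtain ⟨k, hk⟩ := nilpotent hI hnc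
  have h2 := hkey k
  rw [hk, odot_zero] at h2
  exact hx h2.symm

lemma mul_atom_surj {c : A} (hc0 : c ≠ M.zero)
    (hatom : ∀ y, le M y c → y = M.zero ∨ y = c) :
    ∀ x : A, ∃ k, mul M c k = x := by
  letI := po M
  haveI : WellFoundedLT A := Finite.to_wellFoundedLT
  intro x
  induction x using ((IsWellFounded.wf (r := ((· < ·) : A → A → Prop))).induction) with
  | _ x ih =>
    by_cases hx : x = M.zero
    · exact ⟨0, hx.symm⟩
    · have hlt : ominus M x c < x :=
        lt_of_le_of_ne (ominus_le_self x c) (ominus_atom_ne hI hc0 hx)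
      obtain ⟨k, hk⟩ := ih _ hlt
      refine ⟨k + 1, ?_⟩
      show M.oplus (mul M c k) c = x
      rw [hk]
      show sup M x c = x
      rw [sup_comm]
      exact sup_eq_right (atom_le hI hc0 hatom hx)

end Idem2

-- Łukasiewicz chain helpers
def lk (m : ℕ+) (k : ℕ) (h : k ≤ (m : ℕ)) : Luk m :=
  ⟨(k : ℚ) / ((m : ℕ) : ℚ), k, h, rfl⟩

lemma mpos (m : ℕ+) : (0 : ℚ) < ((m : ℕ) : ℚ) := by exact_mod_cast m.pos

lemma lk_inj {m : ℕ+} {k j : ℕ} {hk : k ≤ (m : ℕ)} {hj : j ≤ (m : ℕ)}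
    (h : lk m k hk = lk m j hj) : k = j := by
  have hv := congrArg Subtype.val h
  have hm : ((m : ℕ) : ℚ) ≠ 0 := (mpos m).ne'
  rw [show (lk m k hk).val = (k : ℚ) / ((m : ℕ) : ℚ) from rfl,
    show (lk m j hj).val = (j : ℚ) / ((m : ℕ) : ℚ) from rfl, div_left_inj' hm] at hv
  exact_mod_cast hv

lemma lk_oplus {m : ℕ+} {i j : ℕ} (hi : i ≤ (m : ℕ)) (hj : j ≤ (m : ℕ)) :
    lukOplus (lk m i hi) (lk m j hj) = lk m (min (i + j) (m : ℕ)) (min_le_right _ _) := by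
  apply Subtype.ext
  show min 1 ((i : ℚ) / _ + (j : ℚ) / _) = _
  have hm : (0 : ℚ) < ((m : ℕ) : ℚ) := mpos m
  rw [← add_div]
  show _ = ((min (i + j) (m : ℕ) : ℕ) : ℚ) / _
  rcases le_total (i + j) (m : ℕ) with h | h
  · rw [min_eq_left h, min_eq_right]
    · push_cast; ring_nf
    · rw [div_le_one hm]; exact_mod_cast h
  · rw [min_eq_right h, min_eq_left, div_self hm.ne']
    · rw [one_le_div hm]; exact_mod_cast h

lemma lk_neg {m : ℕ+} {i : ℕ} (hi : i ≤ (m : ℕ)) :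
    lukNeg (lk m i hi) = lk m ((m : ℕ) - i) (Nat.sub_le _ _) := by
  apply Subtype.ext
  show 1 - (i : ℚ) / _ = _
  have hm : (0 : ℚ) < ((m : ℕ) : ℚ) := mpos m
  show _ = (((m : ℕ) - i : ℕ) : ℚ) / _
  rw [Nat.cast_sub hi, sub_div, div_self hm.ne']

lemma lk_zero (m : ℕ+) : lk m 0 (Nat.zero_le _) = lukZero m := by
  apply Subtype.ext
  show (0 : ℚ) / _ = 0
  rw [zero_div]

lemma lk_surj {m : ℕ+} (t : Luk m) : ∃ (k : ℕ) (h : k ≤ (m : ℕ)), lk m k h = t := by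
  obtain ⟨k, hk, hx⟩ := t.2
  exact ⟨k, hk, Subtype.ext hx.symm⟩

-- representation predicate and base case
lemma lk_congr {m : ℕ+} {k j : ℕ} {hk : k ≤ (m : ℕ)} {hj : j ≤ (m : ℕ)}
    (h : k = j) : lk m k hk = lk m j hj := by subst h; rfl

variable (M) in
def Rep : Prop :=
  ∃ (ι : Type) (_ : Fintype ι) (n : ι → ℕ+) (f : A → ∀ i, Luk (n i)),
    Function.Bijective f ∧
    (∀ x y, f (M.oplus x y) = fun i => lukOplus (f x i) (f y i)) ∧
    (∀ x, f (M.neg x) = fun i => lukNeg (f x i)) ∧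
    (f M.zero = fun i => lukZero (n i))

lemma rep_trivial (h01 : M.zero = one M) : Rep M := by
  have hall : ∀ x y : A, x = y := by
    intro x y
    have h1 : le M x y := by
      have hx := le_one (M := M) x
      rw [← h01] at hx
      exact le_trans hx (le_zero y)
    have h2 : le M y x := by
      have hy := le_one (M := M) y
      rw [← h01] at hy
      exact le_trans hy (le_zero x)
    exact le_antisymm h1 h2
  refine ⟨Empty, inferInstance, fun i => i.elim, fun _ i => i.elim,
    ⟨fun x y _ => hall x y, fun t => ⟨M.zero, funext fun i => i.elim⟩⟩,
    fun x y => funext fun i => i.elim, fun x => funext fun i => i.elim,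
    funext fun i => i.elim⟩

lemma rep_base [Finite A] (h01 : M.zero ≠ one M)
    (hI : ∀ e : A, M.oplus e e = e → e = M.zero ∨ e = one M) : Rep M := by
  classical
  obtain ⟨c, hc0, hatom⟩ := exists_atom h01
  have hreach : ∃ k, mul M c k = one M := by
    obtain ⟨k, hk⟩ := order_one hI hc0
    exact ⟨2 ^ k, by rw [← dbl_eq_mul]; exact hk⟩
  set m := Nat.find hreach with hmdef
  have hm : mul M c m = one M := Nat.find_spec hreach
  have hmin : ∀ k, k < m → mul M c k ≠ one M := fun k hk => Nat.find_min hreach hk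
  have hm0 : 0 < m := by
    rcases Nat.eq_zero_or_pos m with h | h
    · exfalso; apply h01; rw [← hm, h]; rfl
    · exact h
  have gtop : ∀ k, m ≤ k → mul M c k = one M := by
    intro k hk
    have h2 := mul_mono (M := M) c hk
    rw [hm] at h2
    exact eq_one_of_one_le h2
  have ginj : ∀ i, i ≤ m → ∀ j, j ≤ m → mul M c i = mul M c j → i = j := by
    have key : ∀ i j, i < j → j ≤ m → mul M c i ≠ mul M c j := by
      intro i j hij hjm heq
      have step : ∀ t, M.oplus (mul M c i) (mul M c (t * (j - i))) = mul M c i := by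
        intro t
        induction t with
        | zero => rw [Nat.zero_mul]; exact M.mv3 _
        | succ t ih =>
            rw [Nat.succ_mul, mul_add c (t * (j - i)) (j - i), ← M.mv1, ih,
              ← mul_add c i (j - i), Nat.add_sub_cancel' (Nat.le_of_lt hij), ← heq]
      have hmm : m ≤ m * (j - i) := Nat.le_mul_of_pos_right m (by omega)
      have h2 := step m
      rw [gtop _ hmm, oplus_one] at h2
      exact hmin i (lt_of_lt_of_le hij hjm) h2.symm
    intro i hi j hj heq
    rcases Nat.lt_trichotomy i j with h | h | h
    · exact absurd heq (key i j h hj)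
    · exact h
    · exact absurd heq.symm (key j i h hi)
  have hsurj : ∀ x : A, ∃ k, k ≤ m ∧ mul M c k = x := by
    intro x
    obtain ⟨k, hk⟩ := mul_atom_surj hI hc0 hatom x
    rcases le_or_gt k m with h | h
    · exact ⟨k, h, hk⟩
    · refine ⟨m, Nat.le_refl m, ?_⟩
      rw [hm, ← gtop k (le_of_lt h)]
      exact hk
  choose idx hidxle hidxval using hsurj
  have uniq : ∀ (x : A) (k : ℕ), k ≤ m → mul M c k = x → idx x = k := by
    intro x k hk hval
    exact ginj _ (hidxle x) _ hk (by rw [hidxval, hval])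
  have th_strict : ∀ i j, i < j → j ≤ m →
      idx (M.neg (mul M c j)) < idx (M.neg (mul M c i)) := by
    intro i j hij hjm
    have hne : mul M c i ≠ mul M c j :=
      fun h => (Nat.ne_of_lt hij) (ginj _ (Nat.le_trans (Nat.le_of_lt hij) hjm) _ hjm h)
    have hle : le M (mul M c i) (mul M c j) := mul_mono c (le_of_lt hij)
    by_contra hcon
    push_neg at hcon
    have h2 : le M (mul M c (idx (M.neg (mul M c i)))) (mul M c (idx (M.neg (mul M c j)))) :=
      mul_mono c hcon
    rw [hidxval (M.neg (mul M c i)), hidxval (M.neg (mul M c j))] at h2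
    have h3 := neg_le_neg h2
    rw [M.mv4, M.mv4] at h3
    exact hne (le_antisymm hle h3)
  have th0 : idx (M.neg (mul M c 0)) = m := by
    apply uniq _ m (Nat.le_refl m)
    rw [hm]
    rfl
  have th_upper : ∀ i, i ≤ m → idx (M.neg (mul M c i)) + i ≤ m := by
    intro i
    induction i with
    | zero => intro _; rw [th0]; omega
    | succ i ih =>
        intro hi1
        have h1 := th_strict i (i + 1) (Nat.lt_succ_self i) hi1
        have h2 := ih (by omega)
        omega
  have th_lower : ∀ d i, i + d = m → d ≤ idx (M.neg (mul M c i)) := by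
    intro d
    induction d with
    | zero => intro i _; exact Nat.zero_le _
    | succ d ih =>
        intro i hi
        have h1 := th_strict i (i + 1) (Nat.lt_succ_self i) (by omega)
        have h2 := ih (i + 1) (by omega)
        omega
  have neg_mul : ∀ i, i ≤ m → M.neg (mul M c i) = mul M c (m - i) := by
    intro i hi
    have h1 := th_upper i hi
    have h2 := th_lower (m - i) i (by omega)
    have h3 : idx (M.neg (mul M c i)) = m - i := by omega
    rw [← hidxval (M.neg (mul M c i)), h3]
  have mul_oplus : ∀ i j, M.oplus (mul M c i) (mul M c j) = mul M c (min (i + j) m) := by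
    intro i j
    rcases le_total (i + j) m with h | h
    · rw [min_eq_left h]
      exact (mul_add c i j).symm
    · rw [min_eq_right h, hm, ← mul_add c i j]
      exact gtop _ h
  refine ⟨Unit, inferInstance, fun _ => ⟨m, hm0⟩,
    fun x _ => lk ⟨m, hm0⟩ (idx x) (hidxle x), ⟨?_, ?_⟩, ?_, ?_, ?_⟩
  · intro x y h
    have h2 := congrFun h Unit.unit
    have h3 := lk_inj h2
    rw [← hidxval x, ← hidxval y, h3]
  · intro t
    obtain ⟨k, hk, hlk⟩ := lk_surj (t Unit.unit)
    refine ⟨mul M c k, funext fun i => ?_⟩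
    have h4 : idx (mul M c k) = k := uniq _ k hk rfl
    cases i
    exact (lk_congr h4).trans hlk
  · intro x y
    funext i
    rw [lk_oplus (m := ⟨m, hm0⟩) (hidxle x) (hidxle y)]
    apply lk_congr
    apply uniq _ _ (min_le_right _ _)
    rw [← mul_oplus, hidxval, hidxval]
  · intro x
    funext i
    rw [lk_neg (m := ⟨m, hm0⟩) (hidxle x)]
    apply lk_congr
    apply uniq _ _ (Nat.sub_le _ _)
    rw [← neg_mul _ (hidxle x), hidxval]
  · funext i
    refine Eq.trans ?_ (lk_zero (⟨m, hm0⟩ : ℕ+))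
    apply lk_congr
    exact uniq _ 0 (Nat.zero_le _) rfl

-- Boolean elements and interval subalgebras
section Bool

variable {b : A} (hb : M.oplus b b = b)

include hb

lemma inf_neg_self_zero : inf M b (M.neg b) = M.zero := by
  rw [inf_comm, inf_eq, M.mv4, hb]
  rw [odot, M.mv4, M.mv2, oplus_neg_self, neg_one]

lemma odot_idem : odot M b b = b := by
  have h0 : odot M b b = ominus M b (M.neg b) := rfl
  rw [h0, ← ominus_inf b (M.neg b), inf_neg_self_zero hb, ominus, M.mv3, M.mv4]

lemma negb_idem : M.oplus (M.neg b) (M.neg b) = M.neg b := by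
  have h2 := congrArg M.neg (odot_idem hb)
  rw [odot, M.mv4] at h2
  exact h2

lemma odot_eq_inf (w : A) : odot M b w = inf M b w := by
  have h1 : inf M b w = odot M b (M.oplus (M.neg b) w) := inf_eq b w
  have h2 : odot M b (inf M b w) = inf M b w := by
    rw [h1, ← odot_assoc, odot_idem hb]
  have h3 := odot_mono (M := M) (le_refl b) (inf_le_right b w)
  rw [h2] at h3
  exact le_antisymm (le_inf (odot_le_left b w) (odot_le_right b w)) h3

lemma oplus_closed {u v : A} (hu : le M u b) (hv : le M v b) :
    le M (M.oplus u v) b := by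
  have h := oplus_le_oplus hu hv
  rw [hb] at h
  exact h

lemma hom_add (x y : A) :
    inf M b (M.oplus x y) = M.oplus (inf M b x) (inf M b y) := by
  refine le_antisymm (inf_oplus_le2 b x y) (le_inf ?_ ?_)
  · exact oplus_closed hb (inf_le_left b x) (inf_le_left b y)
  · exact oplus_le_oplus (inf_le_right b x) (inf_le_right b y)

lemma hom_neg (x : A) : inf M b (M.neg x) = ominus M b (inf M b x) := by
  rw [← odot_eq_inf hb, ← ominus_eq, ominus_inf]

lemma ominus_b_eq (w : A) : ominus M b w = inf M b (M.neg w) := by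
  rw [← ominus_inf b w]
  exact (hom_neg hb w).symm

def subAlg : MVAlgebra {x : A // le M x b} where
  oplus u v := ⟨M.oplus u.1 v.1, oplus_closed hb u.2 v.2⟩
  neg u := ⟨ominus M b u.1, ominus_le_self b u.1⟩
  zero := ⟨M.zero, le_zero b⟩
  mv1 x y z := Subtype.ext (M.mv1 x.1 y.1 z.1)
  mv2 x y := Subtype.ext (M.mv2 x.1 y.1)
  mv3 x := Subtype.ext (M.mv3 x.1)
  mv4 x := Subtype.ext (by
    show ominus M b (ominus M b x.1) = x.1
    rw [ominus_ominus]
    exact inf_eq_right x.2)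
  mv5 x := Subtype.ext (by
    show M.oplus x.1 (ominus M b M.zero) = ominus M b M.zero
    have hz : ominus M b M.zero = b := by rw [ominus, M.mv3, M.mv4]
    rw [hz]
    exact le_antisymm (oplus_closed hb x.2 (le_refl b)) (le_oplus_right b x.1))
  mv6 x y := Subtype.ext (by
    obtain ⟨x, hx⟩ := x
    obtain ⟨y, hy⟩ := y
    show M.oplus (ominus M b (M.oplus (ominus M b x) y)) y
       = M.oplus (ominus M b (M.oplus x (ominus M b y))) x
    rw [← inf_eq_right hx, ← inf_eq_right hy]
    rw [← hom_neg hb x, ← hom_neg hb y]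
    rw [← hom_add hb (M.neg x) y, ← hom_add hb x (M.neg y)]
    rw [← hom_neg hb (M.oplus (M.neg x) y), ← hom_neg hb (M.oplus x (M.neg y))]
    rw [← hom_add hb (M.neg (M.oplus (M.neg x) y)) y,
        ← hom_add hb (M.neg (M.oplus x (M.neg y))) x]
    rw [M.mv6 x y])

lemma recomb (x : A) : M.oplus (inf M b x) (inf M (M.neg b) x) = x := by
  set u := inf M b x with hu
  set v := inf M (M.neg b) x with hv
  have hub : le M u b := inf_le_left b x
  have hux : le M u x := inf_le_right b x
  have hvb : le M v (M.neg b) := inf_le_left (M.neg b) x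
  have hvx : le M v x := inf_le_right (M.neg b) x
  refine le_antisymm (M := M) ?_ ?_
  · have h1 : le M (ominus M (M.oplus u v) x) v := by
      refine le_trans (ominus_antitone_right hux (M.oplus u v)) ?_
      have h := ominus_oplus_le (M := M) v u
      rw [M.mv2 v u] at h
      exact h
    have h2 : le M (ominus M (M.oplus u v) x) u := by
      refine le_trans (ominus_antitone_right hvx (M.oplus u v)) ?_
      exact ominus_oplus_le u v
    have h4 : le M (ominus M (M.oplus u v) x) (inf M u v) := le_inf h2 h1
    have h5 : le M (inf M u v) (inf M b (M.neg b)) :=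
      le_inf (le_trans (inf_le_left u v) hub) (le_trans (inf_le_right u v) hvb)
    rw [inf_neg_self_zero hb] at h5
    exact le_of_ominus_eq_zero (eq_zero_of_le_zero (le_trans h4 h5))
  · have h6 := inf_oplus_le2 (M := M) x b (M.neg b)
    rw [oplus_neg_self' b, inf_one, inf_comm x b, inf_comm x (M.neg b)] at h6
    exact h6

lemma proj_b {u v : A} (hu : le M u b) (hv : le M v (M.neg b)) :
    inf M b (M.oplus u v) = u := by
  refine le_antisymm (M := M) ?_ (le_inf hu (le_oplus_left u v))
  have h1 : le M (ominus M (inf M b (M.oplus u v)) u) v := by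
    refine le_trans (ominus_mono_left (inf_le_right b (M.oplus u v)) u) ?_
    have h := ominus_oplus_le (M := M) v u
    rw [M.mv2 v u] at h
    exact h
  have h2 : le M (ominus M (inf M b (M.oplus u v)) u) b :=
    le_trans (ominus_le_self _ _) (inf_le_left b (M.oplus u v))
  have h3 : le M (ominus M (inf M b (M.oplus u v)) u) (inf M b (M.neg b)) :=
    le_inf h2 (le_trans h1 hv)
  rw [inf_neg_self_zero hb] at h3
  exact le_of_ominus_eq_zero (eq_zero_of_le_zero h3)

lemma proj_negb {u v : A} (hu : le M u b) (hv : le M v (M.neg b)) :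
    inf M (M.neg b) (M.oplus u v) = v := by
  have hu' : le M u (M.neg (M.neg b)) := by rw [M.mv4]; exact hu
  have h := proj_b (negb_idem hb) hv hu'
  rw [M.mv2 v u] at h
  exact h

end Bool

-- combining representations
lemma card_sub_lt [Finite A] {b : A} (hb1 : b ≠ one M) :
    Nat.card {x : A // le M x b} < Nat.card A :=
  Finite.card_subtype_lt (p := fun x => le M x b) (x := one M)
    (fun h => hb1 (eq_one_of_one_le h))

lemma rep_split [Finite A] {b : A} (hb : M.oplus b b = b)
    (h1 : Rep (subAlg hb)) (h2 : Rep (subAlg (negb_idem hb))) : Rep M := by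
  obtain ⟨ι₁, F₁, n₁, f₁, hbij₁, hop₁, hng₁, hz₁⟩ := h1
  obtain ⟨ι₂, F₂, n₂, f₂, hbij₂, hop₂, hng₂, hz₂⟩ := h2
  haveI := F₁
  haveI := F₂
  set φ₁ : A → {x : A // le M x b} := fun x => ⟨inf M b x, inf_le_left b x⟩ with hφ₁
  set φ₂ : A → {x : A // le M x (M.neg b)} :=
    fun x => ⟨inf M (M.neg b) x, inf_le_left (M.neg b) x⟩ with hφ₂
  have hφ₁add : ∀ x y, φ₁ (M.oplus x y) = (subAlg hb).oplus (φ₁ x) (φ₁ y) :=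
    fun x y => Subtype.ext (hom_add hb x y)
  have hφ₂add : ∀ x y, φ₂ (M.oplus x y) = (subAlg (negb_idem hb)).oplus (φ₂ x) (φ₂ y) :=
    fun x y => Subtype.ext (hom_add (negb_idem hb) x y)
  have hφ₁neg : ∀ x, φ₁ (M.neg x) = (subAlg hb).neg (φ₁ x) :=
    fun x => Subtype.ext (hom_neg hb x)
  have hφ₂neg : ∀ x, φ₂ (M.neg x) = (subAlg (negb_idem hb)).neg (φ₂ x) :=
    fun x => Subtype.ext (hom_neg (negb_idem hb) x)
  have hφ₁zero : φ₁ M.zero = (subAlg hb).zero := Subtype.ext (inf_zero b)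
  have hφ₂zero : φ₂ M.zero = (subAlg (negb_idem hb)).zero := Subtype.ext (inf_zero (M.neg b))
  refine ⟨ι₁ ⊕ ι₂, inferInstance, Sum.elim n₁ n₂,
    fun x i => match i with
      | Sum.inl a => f₁ (φ₁ x) a
      | Sum.inr a => f₂ (φ₂ x) a, ⟨?_, ?_⟩, ?_, ?_, ?_⟩
  · intro x y h
    have e1 : f₁ (φ₁ x) = f₁ (φ₁ y) := funext fun a => congrFun h (Sum.inl a)
    have e2 : f₂ (φ₂ x) = f₂ (φ₂ y) := funext fun a => congrFun h (Sum.inr a)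
    have q1 : inf M b x = inf M b y := congrArg Subtype.val (hbij₁.1 e1)
    have q2 : inf M (M.neg b) x = inf M (M.neg b) y := congrArg Subtype.val (hbij₂.1 e2)
    rw [← recomb hb x, ← recomb hb y, q1, q2]
  · intro t
    obtain ⟨u, hu⟩ := hbij₁.2 (fun a => t (Sum.inl a))
    obtain ⟨v, hv⟩ := hbij₂.2 (fun a => t (Sum.inr a))
    refine ⟨M.oplus u.1 v.1, funext fun i => ?_⟩
    have hφu : φ₁ (M.oplus u.1 v.1) = u := Subtype.ext (proj_b hb u.2 v.2)
    have hφv : φ₂ (M.oplus u.1 v.1) = v := Subtype.ext (proj_negb hb u.2 v.2)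
    cases i with
    | inl a =>
        show f₁ (φ₁ (M.oplus u.1 v.1)) a = t (Sum.inl a)
        rw [hφu]
        exact congrFun hu a
    | inr a =>
        show f₂ (φ₂ (M.oplus u.1 v.1)) a = t (Sum.inr a)
        rw [hφv]
        exact congrFun hv a
  · intro x y
    funext i
    cases i with
    | inl a =>
        show f₁ (φ₁ (M.oplus x y)) a = lukOplus (f₁ (φ₁ x) a) (f₁ (φ₁ y) a)
        rw [hφ₁add x y]
        exact congrFun (hop₁ (φ₁ x) (φ₁ y)) a
    | inr a =>
        show f₂ (φ₂ (M.oplus x y)) a = lukOplus (f₂ (φ₂ x) a) (f₂ (φ₂ y) a)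
        rw [hφ₂add x y]
        exact congrFun (hop₂ (φ₂ x) (φ₂ y)) a
  · intro x
    funext i
    cases i with
    | inl a =>
        show f₁ (φ₁ (M.neg x)) a = lukNeg (f₁ (φ₁ x) a)
        rw [hφ₁neg x]
        exact congrFun (hng₁ (φ₁ x)) a
    | inr a =>
        show f₂ (φ₂ (M.neg x)) a = lukNeg (f₂ (φ₂ x) a)
        rw [hφ₂neg x]
        exact congrFun (hng₂ (φ₂ x)) a
  · funext i
    cases i with
    | inl a =>
        show f₁ (φ₁ M.zero) a = lukZero (n₁ a)
        rw [hφ₁zero]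
        exact congrFun hz₁ a
    | inr a =>
        show f₂ (φ₂ M.zero) a = lukZero (n₂ a)
        rw [hφ₂zero]
        exact congrFun hz₂ a

lemma rep_all_aux : ∀ (N : ℕ) (A : Type u) [Finite A] (M : MVAlgebra A),
    Nat.card A ≤ N → Rep M := by
  intro N
  induction N with
  | zero =>
      intro A _ M h
      haveI : Nonempty A := ⟨M.zero⟩
      have hpos : 0 < Nat.card A := Nat.card_pos (α := A)
      omega
  | succ N ih =>
      intro A _ M hcard
      by_cases htriv : M.zero = one M
      · exact rep_trivial htriv
      · by_cases hex : ∃ e : A, M.oplus e e = e ∧ e ≠ M.zero ∧ e ≠ one M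
        · obtain ⟨b, hb, hb0, hb1⟩ := hex
          have hc1 : Nat.card {x : A // le M x b} < Nat.card A := card_sub_lt hb1
          have hc2 : Nat.card {x : A // le M x (M.neg b)} < Nat.card A :=
            card_sub_lt (b := M.neg b) (fun h => hb0 (by rw [← M.mv4 b, h, neg_one]))
          exact rep_split hb
            (ih _ (subAlg hb) (by omega))
            (ih _ (subAlg (negb_idem hb)) (by omega))
        · push_neg at hex
          apply rep_base htriv
          intro e he
          by_cases h0 : e = M.zero
          · exact Or.inl h0
          · exact Or.inr (hex e he h0)

lemma rep_all [Finite A] (M : MVAlgebra A) : Rep M :=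
  rep_all_aux (Nat.card A) A M (Nat.le_refl _)

end MVP

/-- Every finite MV-algebra is isomorphic to a finite direct product of the finite
simple MV-algebras Ł_{n_i} (componentwise operations). -/
theorem finite_iso_prod_luk {A : Type u} [Finite A] (M : MVAlgebra A) :
    ∃ (l : ℕ) (n : Fin l → ℕ+) (f : A → ∀ i, Luk (n i)), Function.Bijective f ∧
      (∀ x y, f (M.oplus x y) = fun i => lukOplus (f x i) (f y i)) ∧
      (∀ x, f (M.neg x) = fun i => lukNeg (f x i)) ∧
      (f M.zero = fun i => lukZero (n i)) := by
  obtain ⟨ι, F, n, f, hbij, hop, hng, hz⟩ := MVP.rep_all M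
  haveI := F
  set e := Fintype.equivFin ι with he
  refine ⟨Fintype.card ι, fun j => n (e.symm j), fun x j => f x (e.symm j),
    ⟨?_, ?_⟩, ?_, ?_, ?_⟩
  · intro x y h
    apply hbij.1
    funext i
    rw [← Equiv.symm_apply_apply e i]
    exact congrFun h (e i)
  · intro t
    set F' := Equiv.piCongrLeft' (fun i => Luk (n i)) e with hF'
    obtain ⟨x, hx⟩ := hbij.2 (F'.symm t)
    refine ⟨x, funext fun j => ?_⟩
    have h2 : F' (f x) = t := by rw [hx]; exact F'.apply_symm_apply t
    exact congrFun h2 j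
  · intro x y
    funext j
    exact congrFun (hop x y) (e.symm j)
  · intro x
    funext j
    exact congrFun (hng x) (e.symm j)
  · funext j
    exact congrFun hz (e.symm j)
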